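/- arXiv:1708.06166 — 2 statements merged into one kernel-verified Lean document; each statement's English description precedes it below -/
import Mathlib

section
/- Let λ > 0 and suppose there exists an n×n real matrix R with all entries nonnegative such that I + λW = RᵀR (i.e., I + λW is completely positive). Then the function x ↦ |x|ᵀ(I + λW)|x| is convex on ℂⁿ (viewed as ℝ²ⁿ), and consequently for every z ∈ ℂⁿ the function x ↦ D_{λ,W}(x; z) = (1/2)‖z − x‖₂² + λ·P_W(x) is convex. -/
open Finset

theorem aux_sum_convex {ι E : Type*} [AddCommGroup E] [Module ℝ E]
    (t : Finset ι) (f : ι → E → ℝ)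
    (h : ∀ i ∈ t, ConvexOn ℝ Set.univ (f i)) :
    ConvexOn ℝ Set.univ (fun x => ∑ i ∈ t, f i x) := by
  induction t using Finset.cons_induction with
  | empty => simpa using convexOn_const (0:ℝ) convex_univ
  | cons i t hi ih =>
    simp only [Finset.sum_cons]
    exact (h i (Finset.mem_cons_self _ _)).add (ih fun j hj => h j (Finset.mem_cons_of_mem hj))

theorem aux_quad_eq (n : ℕ) (R : Matrix (Fin n) (Fin n) ℝ) (a : Fin n → ℝ) :
    ∑ i, ∑ j, (R.transpose * R) i j * (a i * a j)
      = ∑ k, (∑ i, R k i * a i) ^ 2 := by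
  simp only [Matrix.mul_apply, Matrix.transpose_apply, Finset.sum_mul, Finset.mul_sum, sq]
  conv_lhs => enter [2, i]; rw [Finset.sum_comm]
  rw [Finset.sum_comm]
  refine Finset.sum_congr rfl fun k _ => Finset.sum_congr rfl fun i _ =>
    Finset.sum_congr rfl fun j _ => by ring

theorem aux_sq_convex {E : Type*} [AddCommGroup E] [Module ℝ E] {f : E → ℝ}
    (hf : ConvexOn ℝ Set.univ f) (h0 : ∀ x, 0 ≤ f x) :
    ConvexOn ℝ Set.univ (fun x => f x ^ 2) := by
  refine ⟨convex_univ, fun x _ y _ a b ha hb hab => ?_⟩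
  have h1 := hf.2 (Set.mem_univ x) (Set.mem_univ y) ha hb hab
  simp only [smul_eq_mul] at h1 ⊢
  have h2 : f (a • x + b • y) ^ 2 ≤ (a * f x + b * f y) ^ 2 :=
    pow_le_pow_left₀ (h0 _) h1 2
  have h3 : (a * f x + b * f y) ^ 2 ≤ a * f x ^ 2 + b * f y ^ 2 := by
    nlinarith [h0 x, h0 y, sq_nonneg (f x - f y), mul_nonneg ha hb]
  linarith

theorem aux_abs_convex (n : ℕ) (j : Fin n) :
    ConvexOn ℝ Set.univ (fun x : Fin n → ℂ => ‖x j‖) := by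
  have := (convexOn_univ_norm (E := ℂ)).comp_affineMap
    ((LinearMap.proj (R := ℝ) (φ := fun _ : Fin n => ℂ) j).toAffineMap)
  exact this

/-- If I + λW = RᵀR with R entrywise nonnegative (complete positivity), then
x ↦ |x|ᵀ(I + λW)|x| is convex on ℂⁿ, and consequently for every z ∈ ℂⁿ the function
x ↦ D_{λ,W}(x;z) = (1/2)‖z−x‖₂² + λ·P_W(x) is convex. -/
theorem stmt3 (n : ℕ) (hn : 0 < n) (W : Matrix (Fin n) (Fin n) ℝ)
    (hsymm : ∀ i j, W i j = W j i) (hnonneg : ∀ i j, 0 ≤ W i j)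
    (hdiag : ∀ i, W i i = 0) (lam : ℝ) (hlam : 0 < lam)
    (R : Matrix (Fin n) (Fin n) ℝ) (hR : ∀ i j, 0 ≤ R i j)
    (hfact : (1 : Matrix (Fin n) (Fin n) ℝ) + lam • W = R.transpose * R) :
    ConvexOn ℝ Set.univ (fun x : Fin n → ℂ =>
      ∑ i, ∑ j, ((1 : Matrix (Fin n) (Fin n) ℝ) + lam • W) i j
        * (‖x i‖ * ‖x j‖))
    ∧ ∀ z : Fin n → ℂ, ConvexOn ℝ Set.univ (fun x : Fin n → ℂ =>
        (1 / 2) * ∑ i, ‖z i - x i‖ ^ 2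
          + lam * ((∑ i, ‖x i‖)
              + (1 / 2) * ∑ i, ∑ j, W i j * (‖x i‖ * ‖x j‖))) := by
  -- convexity of each row-sum function
  have hrow : ∀ k, ConvexOn ℝ Set.univ
      (fun x : Fin n → ℂ => ∑ j, R k j * ‖x j‖) := by
    intro k
    refine aux_sum_convex _ _ fun j _ => ?_
    have := (aux_abs_convex n j).smul (hR k j)
    simpa [smul_eq_mul] using this
  have hsq : ConvexOn ℝ Set.univ
      (fun x : Fin n → ℂ => ∑ k, (∑ j, R k j * ‖x j‖) ^ 2) := by
    refine aux_sum_convex _ _ fun k _ => ?_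
    exact aux_sq_convex (hrow k) fun x =>
      Finset.sum_nonneg fun j _ => mul_nonneg (hR k j) (norm_nonneg _)
  have part1 : ConvexOn ℝ Set.univ (fun x : Fin n → ℂ =>
      ∑ i, ∑ j, ((1 : Matrix (Fin n) (Fin n) ℝ) + lam • W) i j
        * (‖x i‖ * ‖x j‖)) := by
    have heq : (fun x : Fin n → ℂ =>
        ∑ i, ∑ j, ((1 : Matrix (Fin n) (Fin n) ℝ) + lam • W) i j
          * (‖x i‖ * ‖x j‖))
        = fun x : Fin n → ℂ => ∑ k, (∑ j, R k j * ‖x j‖) ^ 2 := by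
      funext x
      rw [hfact]
      exact aux_quad_eq n R fun i => ‖x i‖
    rw [heq]; exact hsq
  refine ⟨part1, fun z => ?_⟩
  -- diagonal decomposition of the quadratic form
  have hM : ∀ a : Fin n → ℝ,
      ∑ i, ∑ j, ((1 : Matrix (Fin n) (Fin n) ℝ) + lam • W) i j * (a i * a j)
        = (∑ i, a i ^ 2) + lam * ∑ i, ∑ j, W i j * (a i * a j) := by
    intro a
    rw [Finset.mul_sum, ← Finset.sum_add_distrib]
    refine Finset.sum_congr rfl fun i _ => ?_
    simp only [Matrix.add_apply, Matrix.one_apply, Matrix.smul_apply, smul_eq_mul,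
      add_mul, Finset.sum_add_distrib, ite_mul, zero_mul, Finset.sum_ite_eq,
      Finset.mem_univ, if_true, one_mul, Finset.mul_sum]
    ring_nf
  -- linear part is convex
  have hL : ConvexOn ℝ Set.univ
      (fun x : Fin n → ℂ => -∑ i, (z i * (starRingEnd ℂ) (x i)).re) := by
    refine ⟨convex_univ, fun x _ y _ a b ha hb hab => le_of_eq ?_⟩
    simp only [Pi.add_apply, Pi.smul_apply, Complex.real_smul, map_add, map_mul,
      Complex.conj_ofReal, mul_add, Complex.add_re, mul_left_comm,
      Complex.re_ofReal_mul, Finset.sum_add_distrib, smul_eq_mul, Finset.mul_sum]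
    ring_nf
    simp only [show ∀ (c w : ℂ) (r : ℝ), (c * (r:ℂ) * w).re = r * (c * w).re from
      fun c w r => by rw [show c * (r:ℂ) * w = (r:ℂ) * (c * w) by ring, Complex.re_ofReal_mul],
      ← Finset.mul_sum]
  have hl1 : ConvexOn ℝ Set.univ
      (fun x : Fin n → ℂ => lam * ∑ i, ‖x i‖) := by
    have := (aux_sum_convex Finset.univ (fun (j : Fin n) (x : Fin n → ℂ) => ‖x j‖)
      (fun j _ => aux_abs_convex n j)).smul hlam.le
    simpa [smul_eq_mul] using this
  have hhalf : ConvexOn ℝ Set.univ (fun x : Fin n → ℂ =>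
      (1/2 : ℝ) * ∑ i, ∑ j, ((1 : Matrix (Fin n) (Fin n) ℝ) + lam • W) i j
        * (‖x i‖ * ‖x j‖)) := by
    have := part1.smul (by norm_num : (0:ℝ) ≤ 1/2)
    simpa [smul_eq_mul] using this
  have hD : (fun x : Fin n → ℂ =>
        (1 / 2) * ∑ i, ‖z i - x i‖ ^ 2
          + lam * ((∑ i, ‖x i‖)
              + (1 / 2) * ∑ i, ∑ j, W i j * (‖x i‖ * ‖x j‖)))
      = fun x : Fin n → ℂ =>
        ((1/2 : ℝ) * ∑ i, ‖z i‖ ^ 2)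
          + ((-∑ i, (z i * (starRingEnd ℂ) (x i)).re)
            + ((lam * ∑ i, ‖x i‖)
              + (1/2 : ℝ) * ∑ i, ∑ j, ((1 : Matrix (Fin n) (Fin n) ℝ) + lam • W) i j
                  * (‖x i‖ * ‖x j‖))) := by
    funext x
    rw [hM]
    simp only [Complex.sq_norm, Complex.normSq_sub, Finset.sum_add_distrib,
      Finset.sum_sub_distrib, ← Finset.mul_sum]
    ring
  rw [hD]
  exact (convexOn_const _ convex_univ).add (hL.add (hl1.add hhalf))
end

section
/- Suppose: f : ℂⁿ → ℝ is convex and Fréchet differentiable with ∇f Lipschitz continuous with constant L > 0; λ > 0; 0 < α ≤ 1/L; β = αλ; I + βW is positive semidefinite with spectral norm σ > 0; and 0 < η < 2/σ (strict). Fix x^k ∈ ℂⁿ, set z = x^k − α∇f(x^k), define S : ℝⁿ → ℝⁿ₊ by S(x) = P₊(x − η[(I + βW)x + β𝟙 − |z|]), and let u ∈ ℂⁿ be the phase vector with uᵢ = zᵢ/|zᵢ| if zᵢ ≠ 0 and uᵢ = 1 otherwise. Let C(x) = f(x) + λ·P_W(x) and let m ≥ 1. If C(S^m(|x^k|) ⊙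 u) = C(x^k), then S(|x^k|) = |x^k| and x^k = S^m(|x^k|) ⊙ u, i.e., x^k is a fixed point of the iteration. -/
open RealInnerProductSpace Matrix Finset

lemma descent_aux {E : Type*} [NormedAddCommGroup E] [InnerProductSpace ℝ E] [CompleteSpace E]
    (f : E → ℝ) (g : E → E) (hd : ∀ x, HasGradientAt f (g x) x)
    (L : ℝ) (hL : 0 ≤ L) (hlip : ∀ x y, ‖g x - g y‖ ≤ L * ‖x - y‖) (x y : E) :
    f y ≤ f x + ⟪g x, y - x⟫ + L / 2 * ‖y - x‖ ^ 2 := by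
  set d := y - x with hdd
  set φ : ℝ → ℝ := fun t => f (x + t • d) - t * ⟪g x, d⟫ - L / 2 * t ^ 2 * ‖d‖ ^ 2 with hφ
  have hderiv : ∀ t : ℝ, HasDerivAt φ
      (⟪g (x + t • d), d⟫ - ⟪g x, d⟫ - L * t * ‖d‖ ^ 2) t := by
    intro t
    have hc : HasDerivAt (fun t : ℝ => x + t • d) d t := by
      simpa using ((hasDerivAt_id t).smul_const d).const_add x
    have hf : HasFDerivAt f (InnerProductSpace.toDual ℝ E (g (x + t • d))) (x + t • d) :=
      hasGradientAt_iff_hasFDerivAt.mp (hd _)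
    have hcomp := hf.comp_hasDerivAt t hc
    simp only [InnerProductSpace.toDual_apply_apply] at hcomp
    have h1 : HasDerivAt (fun t : ℝ => t * ⟪g x, d⟫ + L / 2 * t ^ 2 * ‖d‖ ^ 2)
        (⟪g x, d⟫ + L * t * ‖d‖ ^ 2) t := by
      have := ((hasDerivAt_pow 2 t).const_mul (L / 2)).mul_const (‖d‖ ^ 2)
      have h2 := (hasDerivAt_id t).mul_const (⟪g x, d⟫ : ℝ)
      exact (h2.add this).congr_deriv (by rw [show (2:ℕ) - 1 = 1 from rfl]; push_cast; ring)
    have := hcomp.sub h1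
    refine (this.congr_deriv (by ring)).congr_of_eventuallyEq (Filter.Eventually.of_forall fun s => ?_)
    simp only [hφ, Function.comp, Pi.sub_apply]; ring
  have hmono : φ 1 ≤ φ 0 := by
    have hcont : ∀ t : ℝ, ContinuousAt φ t := fun t => (hderiv t).continuousAt
    have : AntitoneOn φ (Set.Icc 0 1) := by
      apply antitoneOn_of_deriv_nonpos (convex_Icc 0 1)
      · exact fun t _ => (hcont t).continuousWithinAt
      · exact fun t _ => (hderiv t).differentiableAt.differentiableWithinAt
      · intro t ht
        rw [interior_Icc] at ht
        rw [(hderiv t).deriv]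
        have h1 : ⟪g (x + t • d) - g x, d⟫ ≤ ‖g (x + t • d) - g x‖ * ‖d‖ :=
          real_inner_le_norm _ _
        have h2 : ‖g (x + t • d) - g x‖ ≤ L * (t * ‖d‖) := by
          have := hlip (x + t • d) x
          simpa [norm_smul, abs_of_pos ht.1, mul_assoc] using this
        have : ⟪g (x + t • d), d⟫ - ⟪g x, d⟫ ≤ L * t * ‖d‖ ^ 2 := by
          rw [← inner_sub_left]
          calc _ ≤ ‖g (x + t • d) - g x‖ * ‖d‖ := h1
          _ ≤ L * (t * ‖d‖) * ‖d‖ := by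
              apply mul_le_mul_of_nonneg_right h2 (norm_nonneg _)
          _ = L * t * ‖d‖ ^ 2 := by ring
        linarith
    exact this (by norm_num) (by norm_num) (by norm_num)
  simp only [hφ] at hmono
  simp only [one_smul, zero_smul, add_zero, one_pow, one_mul, zero_pow, mul_zero, zero_mul,
    sub_zero] at hmono
  have : x + d = y := by rw [hdd]; abel
  rw [this] at hmono
  linarith

lemma quad_bound {n : ℕ} (A : Matrix (Fin n) (Fin n) ℝ) (d : Fin n → ℝ) :
    A.mulVec d ⬝ᵥ d ≤ ‖Matrix.toEuclideanCLM (𝕜 := ℝ) A‖ * ∑ i, d i ^ 2 := by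
  set x : EuclideanSpace ℝ (Fin n) := (WithLp.equiv 2 _).symm d with hx
  have h1 : Matrix.toEuclideanCLM (𝕜 := ℝ) A x = (WithLp.equiv 2 _).symm (A.mulVec d) := by
    rw [hx]; rfl
  have h2 : ⟪Matrix.toEuclideanCLM (𝕜 := ℝ) A x, x⟫ = A.mulVec d ⬝ᵥ d := by
    rw [h1, PiLp.inner_apply]
    simp [hx, dotProduct, mul_comm, WithLp.equiv_symm_apply, PiLp.toLp_apply]
  have h3 : ‖x‖ ^ 2 = ∑ i, d i ^ 2 := by
    rw [← real_inner_self_eq_norm_sq, PiLp.inner_apply]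
    simp [hx, sq, WithLp.equiv_symm_apply, PiLp.toLp_apply]
  calc A.mulVec d ⬝ᵥ d = ⟪Matrix.toEuclideanCLM (𝕜 := ℝ) A x, x⟫ := h2.symm
    _ ≤ ‖Matrix.toEuclideanCLM (𝕜 := ℝ) A x‖ * ‖x‖ := real_inner_le_norm _ _
    _ ≤ ‖Matrix.toEuclideanCLM (𝕜 := ℝ) A‖ * ‖x‖ * ‖x‖ := by
        apply mul_le_mul_of_nonneg_right ((Matrix.toEuclideanCLM (𝕜 := ℝ) A).le_opNorm x)
          (norm_nonneg _)
    _ = ‖Matrix.toEuclideanCLM (𝕜 := ℝ) A‖ * ∑ i, d i ^ 2 := by rw [mul_assoc, ← sq, h3]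

lemma step_dec {n : ℕ} (A : Matrix (Fin n) (Fin n) ℝ) (hA : Aᵀ = A) (b : Fin n → ℝ)
    (η σ : ℝ) (hη0 : 0 < η) (hσ : σ = ‖Matrix.toEuclideanCLM (𝕜 := ℝ) A‖)
    (v w : Fin n → ℝ) (hv : ∀ i, 0 ≤ v i)
    (hw : ∀ i, w i = max (v i - η * ((A.mulVec v) i - b i)) 0) :
    (1/2) * (A.mulVec w ⬝ᵥ w) - b ⬝ᵥ w + (1/η - σ/2) * ∑ i, (w i - v i)^2
      ≤ (1/2) * (A.mulVec v ⬝ᵥ v) - b ⬝ᵥ v := by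
  set d : Fin n → ℝ := fun i => w i - v i with hd
  have hinv : η * (1/η) = 1 := mul_one_div_cancel (ne_of_gt hη0)
  have h1 : ∀ i, ((A.mulVec v) i - b i) * d i ≤ -(1/η) * d i ^ 2 := by
    intro i
    set g : ℝ := (A.mulVec v) i - b i with hg
    rcases le_or_gt 0 (v i - η * g) with h | h
    · have hwi : w i = v i - η * g := by rw [hw i, max_eq_left h]
      have hdi : d i = -(η * g) := by simp only [hd]; rw [hwi]; ring
      rw [hdi]
      nlinarith [sq_nonneg g]
    · have hwi : w i = 0 := by rw [hw i, max_eq_right h.le]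
      have hdi : d i = -v i := by simp [hd, hwi]
      have hvi := hv i
      rw [hdi]
      have hvg : v i * v i ≤ η * g * v i :=
        mul_le_mul_of_nonneg_right (by linarith) hvi
      have h1η : (0:ℝ) < 1/η := one_div_pos.mpr hη0
      have hmul := mul_le_mul_of_nonneg_left hvg h1η.le
      have heqq : (1/η) * (η * g * v i) = g * v i := by field_simp
      nlinarith [hmul, heqq]
  have hsum1 : A.mulVec v ⬝ᵥ d - b ⬝ᵥ d ≤ -(1/η) * ∑ i, d i ^ 2 := by
    have : ∑ i, ((A.mulVec v) i - b i) * d i ≤ ∑ i, -(1/η) * d i ^ 2 :=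
      Finset.sum_le_sum fun i _ => h1 i
    calc A.mulVec v ⬝ᵥ d - b ⬝ᵥ d = ∑ i, ((A.mulVec v) i - b i) * d i := by
          simp [dotProduct, Finset.sum_sub_distrib, sub_mul]
      _ ≤ ∑ i, -(1/η) * d i ^ 2 := this
      _ = -(1/η) * ∑ i, d i ^ 2 := by rw [Finset.mul_sum]
  have h2 : A.mulVec d ⬝ᵥ d ≤ σ * ∑ i, d i ^ 2 := hσ ▸ quad_bound A d
  have hwvd : w = v + d := by funext i; simp [hd]
  have hcross : A.mulVec d ⬝ᵥ v = A.mulVec v ⬝ᵥ d := by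
    rw [dotProduct_comm, dotProduct_mulVec, ← Matrix.mulVec_transpose, hA]
  have hexp : A.mulVec w ⬝ᵥ w
      = A.mulVec v ⬝ᵥ v + 2 * (A.mulVec v ⬝ᵥ d) + A.mulVec d ⬝ᵥ d := by
    rw [hwvd, Matrix.mulVec_add, add_dotProduct, dotProduct_add,
      dotProduct_add, hcross]
    ring
  have hbw : b ⬝ᵥ w = b ⬝ᵥ v + b ⬝ᵥ d := by rw [hwvd, dotProduct_add]
  have hDnn : (0:ℝ) ≤ ∑ i, d i ^ 2 := Finset.sum_nonneg fun i _ => sq_nonneg _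
  rw [hexp, hbw]
  linarith

lemma phase_eq (w zz : ℂ) (hz : zz ≠ 0)
    (h : ‖w - zz‖ = |‖w‖ - ‖zz‖|) :
    w = (‖w‖ : ℂ) * (zz / (‖zz‖ : ℂ)) := by
  set r1 := ‖w‖ with hr1
  set r2 := ‖zz‖ with hr2
  have h2 : ‖w - zz‖ ^ 2 = (r1 - r2) ^ 2 := by rw [h, sq_abs]
  have habs : ‖w - zz‖ ^ 2 = (w.re - zz.re)^2 + (w.im - zz.im)^2 := by
    rw [Complex.sq_norm, Complex.normSq_apply, Complex.sub_re, Complex.sub_im]; ring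
  have hnw : r1 ^ 2 = w.re^2 + w.im^2 := by
    rw [hr1, Complex.sq_norm, Complex.normSq_apply]; ring
  have hnz : r2 ^ 2 = zz.re^2 + zz.im^2 := by
    rw [hr2, Complex.sq_norm, Complex.normSq_apply]; ring
  have key : w.re * zz.re + w.im * zz.im = r1 * r2 := by
    linear_combination (habs - h2 - hnw - hnz) / 2
  have lag : (w.re*zz.re + w.im*zz.im)^2 + (w.im*zz.re - w.re*zz.im)^2
      = (w.re^2 + w.im^2) * (zz.re^2 + zz.im^2) := by ring
  have him : w.im * zz.re - w.re * zz.im = 0 := by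
    have hsq : (w.im*zz.re - w.re*zz.im)^2 = 0 := by nlinarith [lag, key, hnw, hnz]
    exact pow_eq_zero_iff two_ne_zero |>.mp hsq
  have hc : w * starRingEnd ℂ zz = ((r1 * r2 : ℝ) : ℂ) := by
    apply Complex.ext
    · rw [Complex.mul_re, Complex.conj_re, Complex.conj_im, Complex.ofReal_re]
      linear_combination key
    · rw [Complex.mul_im, Complex.conj_re, Complex.conj_im, Complex.ofReal_im]
      linear_combination him
  have hzz : zz * starRingEnd ℂ zz = ((r2 ^ 2 : ℝ) : ℂ) := by
    rw [Complex.mul_conj, hr2, Complex.normSq_eq_norm_sq]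
  have hr2pos : 0 < r2 := by rw [hr2]; exact norm_pos_iff.mpr hz
  have hr2ne : (r2 : ℂ) ≠ 0 := Complex.ofReal_ne_zero.mpr (ne_of_gt hr2pos)
  have hfactor : (w * (r2:ℂ) - (r1:ℂ) * zz) * (r2:ℂ) = 0 := by
    push_cast at hc hzz ⊢
    linear_combination zz * hc - w * hzz
  have hmain : w * (r2:ℂ) = (r1:ℂ) * zz := by
    rcases mul_eq_zero.mp hfactor with h' | h'
    · exact sub_eq_zero.mp h'
    · exact absurd h' hr2ne
  field_simp
  linear_combination hmain

lemma mulVec_entry {n : ℕ} (W : Matrix (Fin n) (Fin n) ℝ) (β : ℝ) (v : Fin n → ℝ) (i : Fin n) :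
    (((1 : Matrix (Fin n) (Fin n) ℝ) + β • W).mulVec v) i = v i + β * ∑ j, W i j * v j := by
  simp only [Matrix.mulVec, dotProduct, Matrix.add_apply, Matrix.smul_apply,
    Matrix.one_apply, smul_eq_mul, add_mul, Finset.sum_add_distrib, ite_mul, one_mul, zero_mul]
  rw [Finset.sum_ite_eq univ i v]
  simp [Finset.mul_sum, mul_assoc]

lemma quadform_expand {n : ℕ} (W : Matrix (Fin n) (Fin n) ℝ) (β : ℝ) (v : Fin n → ℝ) :
    ((1 : Matrix (Fin n) (Fin n) ℝ) + β • W).mulVec v ⬝ᵥ v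
      = (∑ i, v i ^ 2) + β * ∑ i, ∑ j, W i j * (v i * v j) := by
  calc ((1 : Matrix (Fin n) (Fin n) ℝ) + β • W).mulVec v ⬝ᵥ v
      = ∑ i, (v i + β * ∑ j, W i j * v j) * v i :=
        Finset.sum_congr rfl fun i _ => by rw [mulVec_entry]
    _ = ∑ i, (v i ^ 2 + β * ∑ j, W i j * (v i * v j)) := by
        refine Finset.sum_congr rfl fun i _ => ?_
        have h : (∑ j, W i j * v j) * v i = ∑ j, W i j * (v i * v j) := by
          rw [Finset.sum_mul]; exact Finset.sum_congr rfl fun j _ => by ring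
        rw [add_mul, ← sq, mul_assoc, h]
    _ = (∑ i, v i ^ 2) + β * ∑ i, ∑ j, W i j * (v i * v j) := by
        rw [Finset.sum_add_distrib, ← Finset.mul_sum]

open RealInnerProductSpace Matrix Finset in
set_option maxHeartbeats 2000000 in
/-- Fixed-point characterization: with strict step size 0 < η < 2/σ, if
C(S^m(|x^k|) ⊙ u) = C(x^k) then S(|x^k|) = |x^k| and x^k = S^m(|x^k|) ⊙ u. -/
theorem stmt13 (n : ℕ) (hn : 0 < n) (W : Matrix (Fin n) (Fin n) ℝ)
    (hsymm : ∀ i j, W i j = W j i) (hnonneg : ∀ i j, 0 ≤ W i j)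
    (hdiag : ∀ i, W i i = 0)
    (f : EuclideanSpace ℂ (Fin n) → ℝ)
    (gradf : EuclideanSpace ℂ (Fin n) → EuclideanSpace ℂ (Fin n))
    (hconv : ConvexOn ℝ Set.univ f)
    (hdiff : ∀ x, HasGradientAt f (gradf x) x)
    (L : ℝ) (hL : 0 < L)
    (hlip : ∀ x y, ‖gradf x - gradf y‖ ≤ L * ‖x - y‖)
    (lam : ℝ) (hlam : 0 < lam)
    (α : ℝ) (hα0 : 0 < α) (hα : α ≤ 1 / L)
    (β : ℝ) (hβ : β = α * lam)
    (hpsd : ((1 : Matrix (Fin n) (Fin n) ℝ) + β • W).PosSemidef)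
    (σ : ℝ) (hσpos : 0 < σ)
    (hσ : σ = ‖Matrix.toEuclideanCLM (𝕜 := ℝ) ((1 : Matrix (Fin n) (Fin n) ℝ) + β • W)‖)
    (η : ℝ) (hη0 : 0 < η) (hη : η < 2 / σ)
    (xk : EuclideanSpace ℂ (Fin n))
    (z : EuclideanSpace ℂ (Fin n)) (hz : z = xk - α • gradf xk)
    (S : (Fin n → ℝ) → (Fin n → ℝ))
    (hS : S = fun x i => max (x i
        - η * ((((1 : Matrix (Fin n) (Fin n) ℝ) + β • W).mulVec x) i
            + β - ‖z i‖)) 0)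
    (u : Fin n → ℂ)
    (hu : ∀ i, u i = if z i ≠ 0 then z i / (‖z i‖ : ℂ) else 1)
    (C : EuclideanSpace ℂ (Fin n) → ℝ)
    (hC : C = fun x => f x + lam * ((∑ i, ‖x i‖)
        + (1 / 2) * ∑ i, ∑ j, W i j * (‖x i‖ * ‖x j‖)))
    (m : ℕ) (hm : 1 ≤ m)
    (heq : C (WithLp.toLp 2 (fun i => ((S^[m] (fun i => ‖xk i‖)) i : ℂ) * u i)) = C xk) :
    S (fun i => ‖xk i‖) = (fun i => ‖xk i‖)
    ∧ xk = WithLp.toLp 2 (fun i => ((S^[m] (fun i => ‖xk i‖)) i : ℂ) * u i) := by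
  have hβpos : 0 < β := by rw [hβ]; positivity
  set a : Fin n → ℝ := fun i => ‖xk i‖ with ha
  set A : Matrix (Fin n) (Fin n) ℝ := 1 + β • W with hA
  have hAsym : Aᵀ = A := by
    rw [hA]
    ext i j
    simp only [Matrix.transpose_apply, Matrix.add_apply, Matrix.smul_apply, Matrix.one_apply,
      smul_eq_mul]
    rw [hsymm j i]
    congr 1
    simp [eq_comm]
  set bb : Fin n → ℝ := fun i => ‖z i‖ - β with hbb
  have hS' : ∀ (x : Fin n → ℝ) (i : Fin n),
      S x i = max (x i - η * ((A.mulVec x) i - bb i)) 0 := by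
    intro x i
    rw [hS]
    simp only [hbb]
    congr 1
    ring
  -- positivity of the stepsize margin
  have hκ : 0 < 1/η - σ/2 := by
    have hησ : η * σ < 2 := by
      rw [lt_div_iff₀ hσpos] at hη; linarith
    have h2 : σ/2 < 1/η := by
      rw [div_lt_div_iff₀ (by norm_num : (0:ℝ) < 2) hη0]
      linarith [mul_comm η σ]
    linarith
  -- nonnegativity of iterates
  have hS_nonneg : ∀ (x : Fin n → ℝ) (i : Fin n), 0 ≤ S x i := by
    intro x i; rw [hS' x i]; exact le_max_right _ _
  have ha_nonneg : ∀ i, 0 ≤ a i := by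
    intro i; simp only [ha]; exact norm_nonneg _
  have hiter_nonneg : ∀ t i, 0 ≤ S^[t] a i := by
    intro t
    induction t with
    | zero => simpa using ha_nonneg
    | succ t ih =>
      rw [Function.iterate_succ_apply']
      exact fun i => hS_nonneg _ i
  -- quadratic objective
  set Q : (Fin n → ℝ) → ℝ := fun v => (1/2) * (A.mulVec v ⬝ᵥ v) - bb ⬝ᵥ v with hQ
  have hstep : ∀ v : Fin n → ℝ, (∀ i, 0 ≤ v i) →
      Q (S v) + (1/η - σ/2) * ∑ i, (S v i - v i)^2 ≤ Q v := by
    intro v hv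
    simpa only [hQ] using
      step_dec A hAsym bb η σ hη0 (by rw [hσ, hA]) v (S v) hv (fun i => hS' v i)
  have hQmono : ∀ t, Q (S^[t] (S a)) ≤ Q (S a) := by
    intro t
    induction t with
    | zero => simp
    | succ t ih =>
      rw [Function.iterate_succ_apply']
      have hnn : ∀ i, 0 ≤ S^[t] (S a) i := by
        intro i
        have := hiter_nonneg (t+1) i
        rwa [Function.iterate_succ_apply] at this
      have h1 := hstep (S^[t] (S a)) hnn
      have h2 : 0 ≤ (1/η - σ/2) * ∑ i, (S (S^[t] (S a)) i - S^[t] (S a) i)^2 :=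
        mul_nonneg hκ.le (Finset.sum_nonneg fun i _ => sq_nonneg _)
      have h3 : Q (S (S^[t] (S a))) ≤ Q (S^[t] (S a)) := le_trans (le_add_of_nonneg_right h2) h1
      exact le_trans h3 ih
  have hQm : Q (S^[m] a) ≤ Q (S a) := by
    obtain ⟨t, rfl⟩ : ∃ t, m = t + 1 := ⟨m - 1, (Nat.succ_pred_eq_of_pos hm).symm⟩
    rw [Function.iterate_succ_apply]
    exact hQmono t
  set D : ℝ := ∑ i, (S a i - a i)^2 with hDdef
  have hDnn : 0 ≤ D := Finset.sum_nonneg fun i _ => sq_nonneg _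
  have hQ1 : Q (S a) + (1/η - σ/2) * D ≤ Q a := hstep a ha_nonneg
  -- penalty
  set Pf : (Fin n → ℝ) → ℝ :=
    fun v => (∑ i, v i) + (1/2) * ∑ i, ∑ j, W i j * (v i * v j) with hPf
  have hGQ : ∀ v : Fin n → ℝ,
      (1/(2*α)) * (∑ i, (v i - ‖z i‖)^2) + lam * Pf v
        = (1/α) * Q v + (1/(2*α)) * ∑ i, ‖z i‖ ^ 2 := by
    intro v
    have hexp := quadform_expand W β v
    rw [← hA] at hexp
    have hbv : bb ⬝ᵥ v = (∑ i, ‖z i‖ * v i) - β * ∑ i, v i := by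
      simp [hbb, dotProduct, sub_mul, Finset.sum_sub_distrib, Finset.mul_sum]
    have hsq : ∑ i, (v i - ‖z i‖)^2
        = (∑ i, v i^2) - 2*(∑ i, ‖z i‖ * v i) + ∑ i, ‖z i‖^2 := by
      have h : ∀ i ∈ univ, (v i - ‖z i‖)^2
          = (v i^2 - 2*(‖z i‖ * v i)) + ‖z i‖^2 := fun i _ => by ring
      rw [Finset.sum_congr rfl h, Finset.sum_add_distrib, Finset.sum_sub_distrib,
        Finset.mul_sum]
    simp only [hQ, hPf]
    rw [hexp, hbv, hsq, hβ]
    field_simp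
    ring
  -- surrogate majorization
  set c₀ : ℝ := f xk - (α/2) * ‖gradf xk‖^2 with hc₀
  have hα' : L ≤ 1/α := by
    have h1 : α * L ≤ 1 := by
      rw [le_div_iff₀ hL] at hα; exact hα
    rw [le_div_iff₀ hα0]
    linarith [mul_comm α L]
  have hsur : ∀ x : EuclideanSpace ℂ (Fin n), f x ≤ c₀ + (1/(2*α)) * ‖x - z‖^2 := by
    intro x
    have hd := descent_aux f gradf hdiff L hL.le hlip xk x
    have hrw : ⟪gradf xk, x - xk⟫ = ⟪x - xk, gradf xk⟫ := real_inner_comm _ _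
    rw [hrw] at hd
    have hLle : L/2 * ‖x - xk‖^2 ≤ 1/(2*α) * ‖x - xk‖^2 := by
      apply mul_le_mul_of_nonneg_right _ (sq_nonneg _)
      rw [show (1:ℝ)/(2*α) = (1/α)/2 by ring]
      linarith
    have hxz : x - z = (x - xk) + α • gradf xk := by rw [hz]; abel
    have hnorm : ‖x - z‖^2
        = ‖x - xk‖^2 + 2*(α * ⟪x - xk, gradf xk⟫) + α^2*‖gradf xk‖^2 := by
      rw [hxz, norm_add_sq_real, real_inner_smul_right, norm_smul]
      simp [abs_of_pos hα0]
      ring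
    have hkey : c₀ + (1/(2*α))*‖x - z‖^2
        = f xk + ⟪x - xk, gradf xk⟫ + (1/(2*α))*‖x - xk‖^2 := by
      rw [hc₀, hnorm]
      field_simp
      ring
    linarith
  have hnormsq : ∀ x : EuclideanSpace ℂ (Fin n), ‖x‖^2 = ∑ i, ‖x i‖^2 := by
    intro x
    rw [EuclideanSpace.norm_eq, Real.sq_sqrt (Finset.sum_nonneg fun i _ => sq_nonneg _)]
  -- modulus computations
  have habs_u : ∀ i, ‖u i‖ = 1 := by
    intro i
    rw [hu i]
    split_ifs with h
    · rw [norm_div, Complex.norm_real, norm_norm]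
      exact div_self (norm_ne_zero_iff.mpr h)
    · simp
  have hmix : ∀ (r : ℝ), 0 ≤ r → ∀ i,
      ‖(r:ℂ) * u i - z i‖ = |r - ‖z i‖| := by
    intro r hr i
    by_cases hzi : z i = 0
    · rw [hu i, if_neg (by simpa using hzi)]
      simp [hzi, Complex.norm_real]
    · have hzane : ‖z i‖ ≠ 0 := norm_ne_zero_iff.mpr hzi
      have hzane' : ((‖z i‖ : ℝ) : ℂ) ≠ 0 := Complex.ofReal_ne_zero.mpr hzane
      rw [hu i, if_pos hzi]
      have e : (r:ℂ) * (z i / (‖z i‖ : ℂ)) - z i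
          = ((r - ‖z i‖ : ℝ) : ℂ) * (z i / (‖z i‖ : ℂ)) := by
        push_cast
        field_simp
      rw [e, norm_mul, norm_div, Complex.norm_real, Complex.norm_real,
        norm_norm, Real.norm_eq_abs, div_self hzane, mul_one]
  -- key C-value computations
  set vm : Fin n → ℝ := S^[m] a with hvm
  have hvm_nonneg : ∀ i, 0 ≤ vm i := fun i => hiter_nonneg m i
  set y : EuclideanSpace ℂ (Fin n) := WithLp.toLp 2 (fun i => ((vm i : ℝ) : ℂ) * u i) with hy
  have hyC : C y ≤ c₀ + (1/(2*α)) * (∑ i, (vm i - ‖z i‖)^2) + lam * Pf vm := by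
    have h1 := hsur y
    have h2 : ‖y - z‖^2 = ∑ i, (vm i - ‖z i‖)^2 := by
      rw [hnormsq]
      refine Finset.sum_congr rfl fun i _ => ?_
      have hsub : (y - z) i = y i - z i := rfl
      rw [hsub]
      have hyi : y i = ((vm i : ℝ) : ℂ) * u i := rfl
      rw [hyi, hmix (vm i) (hvm_nonneg i) i, sq_abs]
    have habsy : ∀ i, ‖y i‖ = vm i := by
      intro i
      have hyi : y i = ((vm i : ℝ) : ℂ) * u i := rfl
      rw [hyi, norm_mul, Complex.norm_real, habs_u, mul_one, Real.norm_eq_abs, abs_of_nonneg (hvm_nonneg i)]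
    have h3 : C y = f y + lam * Pf vm := by
      rw [hC]
      simp only [hPf, habsy]
    rw [h2] at h1
    rw [h3]
    linarith
  have hxkC : C xk = c₀ + (1/(2*α)) * (∑ i, ‖xk i - z i‖^2) + lam * Pf a := by
    have h2 : ‖xk - z‖^2 = α^2 * ‖gradf xk‖^2 := by
      have hxz : xk - z = α • gradf xk := by rw [hz]; abel
      rw [hxz, norm_smul]
      simp [abs_of_pos hα0]
      ring
    have h3 : ∑ i, ‖xk i - z i‖^2 = ‖xk - z‖^2 := by
      rw [hnormsq]
      exact Finset.sum_congr rfl fun i _ => rfl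
    have h4 : (1/(2*α)) * (α^2 * ‖gradf xk‖^2) = (α/2) * ‖gradf xk‖^2 := by
      field_simp
    rw [hC]
    simp only [hPf, ha]
    rw [h3, h2, h4, hc₀]
    ring
  have hEnn : ∀ i, (a i - ‖z i‖)^2 ≤ ‖xk i - z i‖^2 := by
    intro i
    have h1 : |a i - ‖z i‖| ≤ ‖xk i - z i‖ := by
      simp only [ha]
      exact abs_norm_sub_norm_le (xk i) (z i)
    calc (a i - ‖z i‖)^2 = |a i - ‖z i‖|^2 := (sq_abs _).symm
      _ ≤ ‖xk i - z i‖^2 := by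
          apply pow_le_pow_left₀ (abs_nonneg _) h1
  -- the grand chain of inequalities
  set T1 : ℝ := ∑ i, (vm i - ‖z i‖)^2 with hT1
  set T2 : ℝ := ∑ i, (a i - ‖z i‖)^2 with hT2
  set T3 : ℝ := ∑ i, ‖xk i - z i‖^2 with hT3
  have hT23 : T2 ≤ T3 := Finset.sum_le_sum fun i _ => hEnn i
  have hGvm := hGQ vm
  have hGa := hGQ a
  have hCy : C y = C xk := heq
  have hQchain : Q vm ≤ Q a - (1/η - σ/2) * D :=
    le_trans hQm (le_sub_iff_add_le.mpr hQ1)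
  have hmul : (1/α) * Q vm ≤ (1/α) * (Q a - (1/η - σ/2) * D) :=
    mul_le_mul_of_nonneg_left hQchain (by positivity)
  have hinvα : 0 < 1/(2*α) := by positivity
  have hkkpos : 0 < (1/α) * (1/η - σ/2) := by positivity
  have hDD : (1/α) * ((1/η - σ/2) * D) ≤ 0 ∧ T3 ≤ T2 := by
    constructor
    · nlinarith [hyC, hxkC, hGvm, hGa, hmul, hT23, hinvα, hCy]
    · nlinarith [hyC, hxkC, hGvm, hGa, hmul, hinvα, hkkpos, hDnn, hCy]
  have hD0 : D = 0 := by
    rcases hDD with ⟨h1, _⟩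
    nlinarith [hkkpos, hDnn]
  have hT32 : T3 = T2 := le_antisymm hDD.2 hT23
  -- first conclusion
  have hSa : S a = a := by
    funext i
    have hall := (Finset.sum_eq_zero_iff_of_nonneg
      (fun i (_ : i ∈ univ) => sq_nonneg (S a i - a i))).mp hD0 i (mem_univ i)
    have := pow_eq_zero_iff (two_ne_zero) |>.mp hall
    linarith
  have hvma : vm = a := by rw [hvm]; exact Function.iterate_fixed hSa m
  -- termwise equality of moduli
  have hterm : ∀ i, ‖xk i - z i‖^2 = (a i - ‖z i‖)^2 := by
    have hsum0 : ∑ i, (‖xk i - z i‖^2 - (a i - ‖z i‖)^2) = 0 := by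
      rw [Finset.sum_sub_distrib]
      rw [← hT3, ← hT2, hT32]
      ring
    intro i
    have hall := (Finset.sum_eq_zero_iff_of_nonneg
      (fun i (_ : i ∈ univ) => sub_nonneg.mpr (hEnn i))).mp hsum0 i (mem_univ i)
    linarith
  refine ⟨hSa, ?_⟩
  refine (WithLp.equiv 2 _).injective (funext fun i => ?_)
  show xk i = ((S^[m] a) i : ℂ) * u i
  rw [← hvm, hvma]
  by_cases hzi : z i = 0
  · have hazi : ‖z i‖ = 0 := by simp [hzi]
    have hai : a i = 0 := by
      by_contra hne
      have hpos : 0 < a i := lt_of_le_of_ne (ha_nonneg i) (Ne.symm hne)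
      have hfix := congrFun hSa i
      rw [hS' a i] at hfix
      have hWnn : 0 ≤ ∑ j, W i j * a j :=
        Finset.sum_nonneg fun j _ => mul_nonneg (hnonneg i j) (ha_nonneg j)
      have hmv : (A.mulVec a) i = a i + β * ∑ j, W i j * a j := by
        rw [hA]; exact mulVec_entry W β a i
      have hgpos : 0 < (A.mulVec a) i - bb i := by
        rw [hmv]
        simp only [hbb, hazi]
        nlinarith [mul_nonneg hβpos.le hWnn]
      have hlt : max (a i - η * ((A.mulVec a) i - bb i)) 0 < a i := by
        rcases le_or_gt (a i - η * ((A.mulVec a) i - bb i)) 0 with h' | h'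
        · rw [max_eq_right h']; exact hpos
        · rw [max_eq_left h'.le]
          nlinarith [mul_pos hη0 hgpos]
      rw [hfix] at hlt
      exact lt_irrefl _ hlt
    have hxki : xk i = 0 := by
      have h0 : ‖xk i‖ = 0 := by
        have := hai
        simpa only [ha] using this
      exact norm_eq_zero.mp h0
    rw [hxki, hai]
    simp
  · have h1 : ‖xk i - z i‖ = |a i - ‖z i‖| := by
      have h3 : ‖xk i - z i‖^2 = |a i - ‖z i‖|^2 := by
        rw [hterm i, sq_abs]
      rw [← Real.sqrt_sq (norm_nonneg (xk i - z i)), h3, Real.sqrt_sq (abs_nonneg _)]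
    have h2 : a i = ‖xk i‖ := by simp only [ha]
    have hph := phase_eq (xk i) (z i) hzi (by rw [h1, h2])
    rw [hu i, if_pos hzi, h2]
    exact hph
end
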